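/- (Generalized Pressure Distribution Principle) Let (X,d,T) be a topological dynamical system, Z ⊆ X a Borel set, ε > 0, s ∈ ℝ, and ψ ∈ C(X). Suppose there exist a sequence of Borel probability measures μ_k, a constant K > 0, and an integer N such that limsup_{k→∞} μ_k(B_n(x,ε)) ≤ K·exp(−ns + Σ_{i=0}^{n-1} ψ(Tⁱx)) for every Bowen ball B_n(x,ε) intersecting Z with n ≥ N, and suppose some weak* limit measure ν of (μ_k) satisfies ν(Z) > 0. Then P(Z, ψ, ε) ≥ s. -/

import Mathlib

open MeasureTheory Filter Topology Set ENNReal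

/-- Bowen ball `B_m(x,ε)`. -/
def bowenBall {X : Type*} [MetricSpace X] (T : X → X) (m : ℕ) (x : X) (ε : ℝ) : Set X :=
  {y | ∀ i < m, dist (T^[i] x) (T^[i] y) < ε}

/-- Birkhoff sum `S_m ψ(x)`. -/
noncomputable def birkSum {X : Type*} (T : X → X) (ψ : X → ℝ) (m : ℕ) (x : X) : ℝ :=
  ∑ i ∈ Finset.range m, ψ (T^[i] x)

/-- `M(Z,t,ψ,n,ε)`: infimum over countable covers of `Z` by Bowen balls `B_m(x,ε)` with
`m ≥ n` of `Σ exp(−tm + sup_{y ∈ B_m(x,ε)} S_m ψ(y))`. -/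
noncomputable def Mpre {X : Type*} [MetricSpace X] (T : X → X) (ψ : X → ℝ) (Z : Set X)
    (t : ℝ) (n : ℕ) (ε : ℝ) : ENNReal :=
  ⨅ (c : ℕ → X × ℕ) (_ : (∀ j, n ≤ (c j).2) ∧ Z ⊆ ⋃ j, bowenBall T (c j).2 (c j).1 ε),
    ∑' j, ENNReal.ofReal (Real.exp (-t * (c j).2 +
      sSup ((birkSum T ψ (c j).2) '' bowenBall T (c j).2 (c j).1 ε)))

/-- `M(Z,t,ψ,ε) = lim_{n→∞} M(Z,t,ψ,n,ε)` (the quantity is monotone in `n`). -/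
noncomputable def Mlim {X : Type*} [MetricSpace X] (T : X → X) (ψ : X → ℝ) (Z : Set X)
    (t : ℝ) (ε : ℝ) : ENNReal :=
  ⨆ n : ℕ, Mpre T ψ Z t n ε

/-- Topological pressure of `Z` at scale `ε`: the critical value of `t`. -/
noncomputable def pressEps {X : Type*} [MetricSpace X] (T : X → X) (ψ : X → ℝ) (Z : Set X)
    (ε : ℝ) : ℝ :=
  sInf {t : ℝ | Mlim T ψ Z t ε = 0}

/-- Topological pressure `P(Z,ψ) = lim_{ε→0} P(Z,ψ,ε)` (the scale pressure is antitone
in `ε`, so the limit is the supremum over `ε > 0`). -/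
noncomputable def press {X : Type*} [MetricSpace X] (T : X → X) (ψ : X → ℝ) (Z : Set X) : ℝ :=
  ⨆ ε : {e : ℝ // 0 < e}, pressEps T ψ Z ε

set_option linter.unusedSectionVars false

section Aux
variable {X : Type*} [MetricSpace X]

variable {X : Type*} [MetricSpace X]

lemma bowenBall_isOpen {T : X → X} (hT : Continuous T) (m : ℕ) (x : X) (ε : ℝ) :
    IsOpen (bowenBall T m x ε) := by
  have h : bowenBall T m x ε = ⋂ i ∈ Finset.range m, (T^[i]) ⁻¹' (Metric.ball (T^[i] x) ε) := by
    ext y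
    simp [bowenBall, Metric.mem_ball, dist_comm]
  rw [h]
  exact isOpen_biInter_finset fun i _ => Metric.isOpen_ball.preimage (hT.iterate i)

lemma self_mem_bowenBall {T : X → X} {m : ℕ} {x : X} {ε : ℝ} (hε : 0 < ε) :
    x ∈ bowenBall T m x ε := fun i _ => by simpa using hε

lemma birkSum_le {T : X → X} {ψ : X → ℝ} {C : ℝ} (hC : ∀ x, |ψ x| ≤ C) (m : ℕ) (y : X) :
    birkSum T ψ m y ≤ m * C := by
  calc birkSum T ψ m y ≤ ∑ i ∈ Finset.range m, C :=
        Finset.sum_le_sum fun i _ => (abs_le.mp (hC _)).2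
    _ = m * C := by simp [mul_comm]

lemma bddAbove_birk {T : X → X} {ψ : X → ℝ} {C : ℝ} (hC : ∀ x, |ψ x| ≤ C) (m : ℕ) (S : Set X) :
    BddAbove ((birkSum T ψ m) '' S) := by
  refine ⟨m * C, ?_⟩
  rintro r ⟨y, _, rfl⟩
  exact birkSum_le hC m y

lemma sSup_birk_le {T : X → X} {ψ : X → ℝ} {C : ℝ} (hC : ∀ x, |ψ x| ≤ C) (m : ℕ) {S : Set X}
    (hS : S.Nonempty) : sSup ((birkSum T ψ m) '' S) ≤ m * C :=
  csSup_le (hS.image _) (by rintro r ⟨y, _, rfl⟩; exact birkSum_le hC m y)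

lemma exists_bowen_cover (T : X → X) [CompactSpace X] [Nonempty X] {ε : ℝ} (hε : 0 < ε) :
    ∃ L : ℕ, 1 ≤ L ∧ ∀ m : ℕ, ∃ c : Fin (L ^ m) → X,
      ∀ y : X, ∃ j, y ∈ bowenBall T m (c j) ε := by
  obtain ⟨t, -, tfin, htcov⟩ :=
    finite_cover_balls_of_compact (isCompact_univ (X := X)) (half_pos hε)
  classical
  refine ⟨tfin.toFinset.card, ?_, ?_⟩
  · rw [Nat.one_le_iff_ne_zero, ← Nat.pos_iff_ne_zero, Finset.card_pos]
    obtain ⟨x₀⟩ := ‹Nonempty X›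
    obtain ⟨g, hg, -⟩ := mem_iUnion₂.mp (htcov (mem_univ x₀))
    exact ⟨g, tfin.mem_toFinset.mpr hg⟩
  · intro m
    set G := tfin.toFinset with hG
    have hcard : Fintype.card (Fin m → {g // g ∈ G}) = G.card ^ m := by
      simp [Fintype.card_fun]
    let e : Fin (G.card ^ m) ≃ (Fin m → {g // g ∈ G}) :=
      (Fintype.equivFinOfCardEq hcard).symm
    let A : (Fin m → {g // g ∈ G}) → Set X :=
      fun σ => {y | ∀ i : Fin m, dist (T^[(i : ℕ)] y) ((σ i) : X) < ε / 2}
    let ctr : (Fin m → {g // g ∈ G}) → X :=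
      fun σ => if h : (A σ).Nonempty then h.choose else Classical.arbitrary X
    refine ⟨fun j => ctr (e j), fun y => ?_⟩
    have hchoice : ∀ i : Fin m, ∃ g : {g // g ∈ G}, dist (T^[(i : ℕ)] y) (g : X) < ε / 2 := by
      intro i
      obtain ⟨g, hg, hd⟩ := mem_iUnion₂.mp (htcov (mem_univ (T^[(i : ℕ)] y)))
      exact ⟨⟨g, tfin.mem_toFinset.mpr hg⟩, hd⟩
    choose σ hσ using hchoice
    have hyA : y ∈ A σ := hσ
    refine ⟨e.symm σ, ?_⟩
    show y ∈ bowenBall T m (ctr (e (e.symm σ))) ε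
    rw [e.apply_symm_apply σ]
    have hA : (A σ).Nonempty := ⟨y, hyA⟩
    have hc : ctr σ = hA.choose := dif_pos hA
    have hcm : ctr σ ∈ A σ := hc ▸ hA.choose_spec
    intro i him
    calc dist (T^[i] (ctr σ)) (T^[i] y)
        ≤ dist (T^[i] (ctr σ)) ((σ ⟨i, him⟩ : X)) + dist ((σ ⟨i, him⟩ : X)) (T^[i] y) :=
          dist_triangle _ _ _
      _ < ε / 2 + ε / 2 := by
          refine add_lt_add (hcm ⟨i, him⟩) ?_
          rw [dist_comm]; exact hσ ⟨i, him⟩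
      _ = ε := add_halves ε


lemma Mlim_zero (T : X → X) [Nonempty X] (ψ : X → ℝ)
    {C : ℝ} (hC : ∀ x, |ψ x| ≤ C) (Z : Set X) {ε : ℝ} (hε : 0 < ε)
    {L : ℕ} (hL : 1 ≤ L)
    (hcov : ∀ m, ∃ c : Fin (L ^ m) → X, ∀ y, ∃ j, y ∈ bowenBall T m (c j) ε) :
    Mlim T ψ Z (C + Real.log L + 1) ε = 0 := by
  classical
  set t := C + Real.log L + 1 with ht
  have hLpos : (0:ℝ) < L := by exact_mod_cast hL
  have hu : 1 ≤ t - C := by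
    have : 0 ≤ Real.log L := Real.log_nonneg (by exact_mod_cast hL)
    rw [ht]; linarith
  rw [Mlim, ENNReal.iSup_eq_zero]
  intro n
  have key : ∀ m, n ≤ m → Mpre T ψ Z t n ε ≤ 3 * ENNReal.ofReal (Real.exp (-(m:ℝ))) := by
    intro m hm
    obtain ⟨cc, hcc⟩ := hcov m
    set c : ℕ → X × ℕ :=
      fun j => if h : j < L ^ m then (cc ⟨j, h⟩, m) else (Classical.arbitrary X, m + j) with hcdef
    have hlen : ∀ j, (c j).2 = if j < L ^ m then m else m + j := by
      intro j; by_cases h : j < L ^ m <;> simp [hcdef, h]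
    have h1 : ∀ j, n ≤ (c j).2 := by
      intro j; rw [hlen]; split <;> omega
    have h2 : Z ⊆ ⋃ j, bowenBall T (c j).2 (c j).1 ε := by
      intro y _
      obtain ⟨j, hj⟩ := hcc y
      refine mem_iUnion.mpr ⟨(j : ℕ), ?_⟩
      have hcj : c (j : ℕ) = (cc j, m) := by simp [hcdef, j.isLt]
      rw [hcj]
      exact hj
    refine le_trans (iInf_le_of_le c (iInf_le_of_le ⟨h1, h2⟩ le_rfl)) ?_
    -- per-term bound
    have hterm : ∀ j, ENNReal.ofReal (Real.exp (-t * (c j).2 +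
        sSup ((birkSum T ψ (c j).2) '' bowenBall T (c j).2 (c j).1 ε)))
        ≤ (if j < L ^ m then ENNReal.ofReal (Real.exp (-(m:ℝ) * (t - C))) else 0)
          + ENNReal.ofReal (Real.exp (-((m + j : ℕ) : ℝ) * (t - C))) := by
      intro j
      have hgen : ∀ j, ENNReal.ofReal (Real.exp (-t * (c j).2 +
          sSup ((birkSum T ψ (c j).2) '' bowenBall T (c j).2 (c j).1 ε)))
          ≤ ENNReal.ofReal (Real.exp (-((c j).2 : ℝ) * (t - C))) := by
        intro j
        apply ENNReal.ofReal_le_ofReal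
        apply Real.exp_le_exp.mpr
        have hss : sSup ((birkSum T ψ (c j).2) '' bowenBall T (c j).2 (c j).1 ε)
            ≤ ((c j).2 : ℝ) * C := by
          apply csSup_le (Set.Nonempty.image _ ⟨(c j).1, self_mem_bowenBall hε⟩)
          rintro r ⟨y, -, rfl⟩
          exact birkSum_le hC _ y
        nlinarith [hss]
      by_cases h : j < L ^ m
      · rw [if_pos h]
        refine le_trans (hgen j) (le_add_of_le_of_nonneg ?_ zero_le)
        have : (c j).2 = m := by rw [hlen]; simp [h]
        rw [this]
      · rw [if_neg h]
        rw [zero_add]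
        have : (c j).2 = m + j := by rw [hlen]; simp [h]
        rw [← this]
        exact hgen j
    refine le_trans (ENNReal.tsum_le_tsum hterm) ?_
    rw [ENNReal.tsum_add]
    have hsum1 : (∑' j : ℕ, (if j < L ^ m then ENNReal.ofReal (Real.exp (-(m:ℝ) * (t - C))) else 0))
        = ENNReal.ofReal (Real.exp (-(m:ℝ))) := by
      rw [tsum_eq_sum (s := Finset.range (L ^ m)) (by intro j hj; rw [if_neg]; simpa using hj)]
      have : ∀ j ∈ Finset.range (L ^ m), (if j < L ^ m then ENNReal.ofReal (Real.exp (-(m:ℝ) * (t - C))) else 0)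
          = ENNReal.ofReal (Real.exp (-(m:ℝ) * (t - C))) := by
        intro j hj; rw [if_pos (Finset.mem_range.mp hj)]
      rw [Finset.sum_congr rfl this, Finset.sum_const, Finset.card_range, nsmul_eq_mul]
      rw [← ENNReal.ofReal_natCast (L ^ m), ← ENNReal.ofReal_mul (by positivity)]
      congr 1
      have hqr : ((L ^ m : ℕ) : ℝ) = Real.exp (m * Real.log L) := by
        push_cast
        rw [Real.exp_nat_mul, Real.exp_log hLpos]
      rw [hqr, ← Real.exp_add]
      congr 1
      rw [ht]; ring
    have hsum2 : (∑' j : ℕ, ENNReal.ofReal (Real.exp (-((m + j : ℕ) : ℝ) * (t - C))))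
        ≤ 2 * ENNReal.ofReal (Real.exp (-(m:ℝ))) := by
      have hrw : ∀ j : ℕ, ENNReal.ofReal (Real.exp (-((m + j : ℕ) : ℝ) * (t - C)))
          = ENNReal.ofReal (Real.exp (-(m:ℝ) * (t - C)))
            * (ENNReal.ofReal (Real.exp (-(t - C)))) ^ j := by
        intro j
        rw [← ENNReal.ofReal_pow (Real.exp_nonneg _), ← Real.exp_nat_mul,
          ← ENNReal.ofReal_mul (Real.exp_nonneg _), ← Real.exp_add]
        congr 1
        push_cast
        ring
      rw [tsum_congr hrw, ENNReal.tsum_mul_left, ENNReal.tsum_geometric]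
      have hhalf : ENNReal.ofReal (Real.exp (-(t - C))) ≤ 2⁻¹ := by
        have h1 : Real.exp (-(t - C)) ≤ Real.exp (-1) := Real.exp_le_exp.mpr (by linarith)
        have h2 : Real.exp (-1) ≤ 1 / 2 := by
          rw [Real.exp_neg]
          rw [div_eq_inv_mul, mul_one]
          apply inv_anti₀ (by norm_num)
          have := Real.add_one_le_exp 1
          linarith
        refine le_trans (ENNReal.ofReal_le_ofReal (h1.trans h2)) ?_
        rw [ENNReal.ofReal_div_of_pos (by norm_num), ENNReal.ofReal_one, ENNReal.ofReal_ofNat]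
        rw [ENNReal.div_eq_inv_mul, mul_one]
      have hinv : (1 - ENNReal.ofReal (Real.exp (-(t - C))))⁻¹ ≤ 2 := by
        have h12 : (2:ℝ≥0∞)⁻¹ ≤ 1 - ENNReal.ofReal (Real.exp (-(t - C))) := by
          have : (1:ℝ≥0∞) - 2⁻¹ = 2⁻¹ := by
            rw [← one_div]
            exact ENNReal.sub_half (by norm_num)
          calc (2:ℝ≥0∞)⁻¹ = 1 - 2⁻¹ := this.symm
            _ ≤ 1 - ENNReal.ofReal (Real.exp (-(t - C))) := tsub_le_tsub_left hhalf 1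
        calc (1 - ENNReal.ofReal (Real.exp (-(t - C))))⁻¹ ≤ ((2:ℝ≥0∞)⁻¹)⁻¹ :=
              ENNReal.inv_le_inv.mpr h12
          _ = 2 := inv_inv 2
      have hexp : ENNReal.ofReal (Real.exp (-(m:ℝ) * (t - C))) ≤ ENNReal.ofReal (Real.exp (-(m:ℝ))) := by
        apply ENNReal.ofReal_le_ofReal
        apply Real.exp_le_exp.mpr
        nlinarith [Nat.cast_nonneg (α := ℝ) m]
      calc ENNReal.ofReal (Real.exp (-(m:ℝ) * (t - C)))
            * (1 - ENNReal.ofReal (Real.exp (-(t - C))))⁻¹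
          ≤ ENNReal.ofReal (Real.exp (-(m:ℝ))) * 2 := mul_le_mul' hexp hinv
        _ = 2 * ENNReal.ofReal (Real.exp (-(m:ℝ))) := by ring
    rw [hsum1]
    calc ENNReal.ofReal (Real.exp (-(m:ℝ)))
          + (∑' j : ℕ, ENNReal.ofReal (Real.exp (-((m + j : ℕ) : ℝ) * (t - C))))
        ≤ ENNReal.ofReal (Real.exp (-(m:ℝ))) + 2 * ENNReal.ofReal (Real.exp (-(m:ℝ))) :=
          add_le_add_right hsum2 _
      _ = 3 * ENNReal.ofReal (Real.exp (-(m:ℝ))) := by ring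
  have htend : Tendsto (fun m : ℕ => 3 * ENNReal.ofReal (Real.exp (-(m:ℝ)))) atTop (𝓝 0) := by
    have h0 : Tendsto (fun m : ℕ => Real.exp (-(m:ℝ))) atTop (𝓝 0) :=
      Real.tendsto_exp_atBot.comp (tendsto_neg_atBot_iff.mpr tendsto_natCast_atTop_atTop)
    have h1 := ENNReal.tendsto_ofReal h0
    rw [ENNReal.ofReal_zero] at h1
    have h2 := ENNReal.Tendsto.const_mul h1 (Or.inr (by norm_num : (3:ℝ≥0∞) ≠ ⊤))
    simpa using h2
  have : Mpre T ψ Z t n ε ≤ 0 :=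
    ge_of_tendsto htend (eventually_atTop.mpr ⟨n, key⟩)
  exact le_antisymm this zero_le


end Aux

/-- Generalized Pressure Distribution Principle: if a sequence of Borel probability
measures `μ k` satisfies `limsup_k μ_k(B_n(x,ε)) ≤ K exp(−ns + S_n ψ(x))` for every Bowen
ball meeting `Z` with `n ≥ N`, and some weak* limit `ν` of the sequence gives `Z` positive
measure, then `P(Z,ψ,ε) ≥ s`. -/

theorem generalized_pressure_distribution_principle {X : Type*} [MetricSpace X]
    [CompactSpace X] [MeasurableSpace X] [BorelSpace X]
    (T : X → X) (hT : Continuous T) (ψ : X → ℝ) (hψ : Continuous ψ)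
    (Z : Set X) (hZ : MeasurableSet Z) (ε : ℝ) (hε : 0 < ε) (s : ℝ)
    (μ : ℕ → Measure X) (hprob : ∀ k, IsProbabilityMeasure (μ k))
    (K : ℝ) (hK : 0 < K) (N : ℕ)
    (hbound : ∀ (x : X) (n : ℕ), N ≤ n → (bowenBall T n x ε ∩ Z).Nonempty →
      limsup (fun k => μ k (bowenBall T n x ε)) atTop
        ≤ ENNReal.ofReal (K * Real.exp (-(n : ℝ) * s + birkSum T ψ n x)))
    (ν : Measure X) (hν : IsProbabilityMeasure ν)
    (k : ℕ → ℕ) (hk : StrictMono k)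
    (hlim : ∀ f : C(X, ℝ),
      Tendsto (fun j => ∫ x, f x ∂(μ (k j))) atTop (nhds (∫ x, f x ∂ν)))
    (hνZ : 0 < ν Z) :
    s ≤ pressEps T ψ Z ε := by
  classical
  haveI hXne : Nonempty X := by
    by_contra h
    rw [not_nonempty_iff] at h
    have h1 := hν.measure_univ
    rw [Set.univ_eq_empty_iff.mpr h] at h1
    simp at h1
  obtain ⟨C, hC⟩ : ∃ C : ℝ, ∀ x, |ψ x| ≤ C := by
    obtain ⟨C, hC⟩ := IsCompact.exists_bound_of_continuousOn isCompact_univ hψ.continuousOn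
    exact ⟨C, fun x => by simpa using hC x (mem_univ x)⟩
  obtain ⟨L, hL, hcov⟩ := exists_bowen_cover T hε
  have hne : {t : ℝ | Mlim T ψ Z t ε = 0}.Nonempty :=
    ⟨C + Real.log L + 1, Mlim_zero T ψ hC Z hε hL hcov⟩
  refine le_csInf hne ?_
  intro t ht0
  rw [Set.mem_setOf_eq] at ht0
  by_contra hts
  push_neg at hts
  -- weak* convergence machinery
  let P : ℕ → ProbabilityMeasure X := fun j => ⟨μ (k j), hprob _⟩
  let Q : ProbabilityMeasure X := ⟨ν, hν⟩
  have hPQ : Tendsto P atTop (𝓝 Q) := by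
    rw [ProbabilityMeasure.tendsto_iff_forall_integral_tendsto]
    intro f
    exact hlim f.toContinuousMap
  have hport : ∀ (m : ℕ) (x : X), ν (bowenBall T m x ε)
      ≤ limsup (fun i => μ i (bowenBall T m x ε)) atTop := by
    intro m x
    have hopen := bowenBall_isOpen hT m x ε
    have h1 : ν (bowenBall T m x ε) ≤ liminf (fun j => μ (k j) (bowenBall T m x ε)) atTop :=
      ProbabilityMeasure.le_liminf_measure_open_of_tendsto hPQ hopen
    have h2 : liminf (fun j => μ (k j) (bowenBall T m x ε)) atTop
        ≤ limsup (fun j => μ (k j) (bowenBall T m x ε)) atTop := liminf_le_limsup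
    have h3 : limsup (fun j => μ (k j) (bowenBall T m x ε)) atTop
        ≤ limsup (fun i => μ i (bowenBall T m x ε)) atTop := by
      have he : limsup (fun j => μ (k j) (bowenBall T m x ε)) atTop
          = limsup (fun i => μ i (bowenBall T m x ε)) (map k atTop) := by
        rw [Filter.limsup, Filter.limsup, Filter.map_map]
        rfl
      rw [he]
      exact limsup_le_limsup_of_le hk.tendsto_atTop
    exact h1.trans (h2.trans h3)
  have hMpre : ∀ n, Mpre T ψ Z t n ε = 0 := fun n =>
    le_antisymm (le_trans (le_iSup (fun n => Mpre T ψ Z t n ε) n) (le_of_eq ht0)) zero_le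
  have hkey : ∀ n, N ≤ n → ν Z ≤ ENNReal.ofReal (K * Real.exp (-(n:ℝ) * (s - t))) := by
    intro n hn
    have h0 : Mpre T ψ Z t n ε < 1 := by rw [hMpre n]; exact zero_lt_one
    rw [Mpre, iInf_lt_iff] at h0
    obtain ⟨c, h0⟩ := h0
    rw [iInf_lt_iff] at h0
    obtain ⟨⟨hc1, hc2⟩, hsum⟩ := h0
    have hterm : ∀ j, ν (bowenBall T (c j).2 (c j).1 ε ∩ Z)
        ≤ ENNReal.ofReal (K * Real.exp (-(n:ℝ) * (s - t)))
          * ENNReal.ofReal (Real.exp (-t * (c j).2 +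
              sSup ((birkSum T ψ (c j).2) '' bowenBall T (c j).2 (c j).1 ε))) := by
      intro j
      by_cases hmeet : (bowenBall T (c j).2 (c j).1 ε ∩ Z).Nonempty
      · have step1 : ν (bowenBall T (c j).2 (c j).1 ε ∩ Z)
            ≤ ν (bowenBall T (c j).2 (c j).1 ε) := measure_mono inter_subset_left
        have step2 := hport (c j).2 (c j).1
        have step3 := hbound (c j).1 (c j).2 (hn.trans (hc1 j)) hmeet
        refine le_trans step1 (le_trans step2 (le_trans step3 ?_))
        rw [← ENNReal.ofReal_mul (by positivity)]
        apply ENNReal.ofReal_le_ofReal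
        rw [mul_assoc, ← Real.exp_add]
        have hbirk : birkSum T ψ (c j).2 (c j).1
            ≤ sSup ((birkSum T ψ (c j).2) '' bowenBall T (c j).2 (c j).1 ε) := by
          apply le_csSup (bddAbove_birk hC _ _)
          exact mem_image_of_mem _ (self_mem_bowenBall hε)
        have hmn : (n : ℝ) ≤ ((c j).2 : ℝ) := by exact_mod_cast hc1 j
        have hst : 0 < s - t := by linarith
        apply mul_le_mul_of_nonneg_left _ (le_of_lt hK)
        apply Real.exp_le_exp.mpr
        nlinarith [hbirk, hmn, hst]
      · rw [Set.not_nonempty_iff_eq_empty] at hmeet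
        rw [hmeet]
        simp
    calc ν Z ≤ ν (⋃ j, (bowenBall T (c j).2 (c j).1 ε ∩ Z)) := by
          apply measure_mono
          intro y hy
          obtain ⟨S, ⟨j, rfl⟩, hyS⟩ := hc2 hy
          exact mem_iUnion.mpr ⟨j, hyS, hy⟩
      _ ≤ ∑' j, ν (bowenBall T (c j).2 (c j).1 ε ∩ Z) := measure_iUnion_le _
      _ ≤ ∑' j, ENNReal.ofReal (K * Real.exp (-(n:ℝ) * (s - t)))
            * ENNReal.ofReal (Real.exp (-t * (c j).2 +
              sSup ((birkSum T ψ (c j).2) '' bowenBall T (c j).2 (c j).1 ε))) :=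
          ENNReal.tsum_le_tsum hterm
      _ = ENNReal.ofReal (K * Real.exp (-(n:ℝ) * (s - t)))
            * ∑' j, ENNReal.ofReal (Real.exp (-t * (c j).2 +
              sSup ((birkSum T ψ (c j).2) '' bowenBall T (c j).2 (c j).1 ε))) :=
          ENNReal.tsum_mul_left
      _ ≤ ENNReal.ofReal (K * Real.exp (-(n:ℝ) * (s - t))) * 1 :=
          mul_le_mul_right hsum.le _
      _ = ENNReal.ofReal (K * Real.exp (-(n:ℝ) * (s - t))) := mul_one _
  have htend : Tendsto (fun n : ℕ => ENNReal.ofReal (K * Real.exp (-(n:ℝ) * (s - t))))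
      atTop (𝓝 0) := by
    have hst : 0 < s - t := by linarith
    have h0 : Tendsto (fun n : ℕ => -(n:ℝ) * (s - t)) atTop atBot := by
      have hneg : Tendsto (fun n : ℕ => -((n:ℝ) * (s - t))) atTop atBot :=
        tendsto_neg_atBot_iff.mpr ((tendsto_natCast_atTop_atTop (R := ℝ)).atTop_mul_const hst)
      simpa [neg_mul] using hneg
    have h1 : Tendsto (fun n : ℕ => K * Real.exp (-(n:ℝ) * (s - t))) atTop (𝓝 0) := by
      have := (Real.tendsto_exp_atBot.comp h0).const_mul K
      simpa using this
    have h2 := ENNReal.tendsto_ofReal h1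
    rwa [ENNReal.ofReal_zero] at h2
  have hfin : ν Z ≤ 0 := ge_of_tendsto htend (eventually_atTop.mpr ⟨N, hkey⟩)
  exact absurd (le_antisymm hfin zero_le) hνZ.ne'
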